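/- Let K be a convex subset of the Euclidean plane and q a fixed point. Then the set S = {x ∈ K : dist(x, q) ≤ dist(x, Kᶜ)} is convex. (S is the set of centers x such that the largest ball centered at x inscribed in K contains q.) -/

import Mathlib

theorem centers_containing_query_convex (K : Set (EuclideanSpace ℝ (Fin 2)))
    (hK : Convex ℝ K) (q : EuclideanSpace ℝ (Fin 2)) :
    Convex ℝ {x ∈ K | dist x q ≤ Metric.infDist x Kᶜ} := by
  intro x hx y hy a b ha hb hab
  obtain ⟨hxK, hxq⟩ := hx
  obtain ⟨hyK, hyq⟩ := hy
  have hzK : a • x + b • y ∈ K := hK hxK hyK ha hb hab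
  refine ⟨hzK, ?_⟩
  rcases Set.eq_empty_or_nonempty Kᶜ with hc | hc
  · -- K = univ : infDist to ∅ is 0, so x = q and y = q
    have hx0 : dist x q ≤ 0 := by simpa [hc] using hxq
    have hy0 : dist y q ≤ 0 := by simpa [hc] using hyq
    have hx' : x = q := by
      have := dist_nonneg (x := x) (y := q); have : dist x q = 0 := le_antisymm hx0 this
      exact dist_eq_zero.mp this
    have hy' : y = q := by
      have := dist_nonneg (x := y) (y := q); have : dist y q = 0 := le_antisymm hy0 this
      exact dist_eq_zero.mp this
    rw [hx', hy', ← add_smul, hab, one_smul]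
    simpa using Metric.infDist_nonneg
  · set z := a • x + b • y with hz
    set r₁ := dist x q
    set r₂ := dist y q
    set r := a * r₁ + b * r₂ with hr
    have hzq : dist z q ≤ r :=
      (convexOn_univ_dist q).2 (Set.mem_univ x) (Set.mem_univ y) ha hb hab
    have hball : ∀ w ∉ K, r ≤ dist z w := by
      intro w hw
      by_contra h
      push_neg at h
      have hv : ‖w - z‖ < r := by rw [dist_comm, dist_eq_norm] at h; exact h
      have hrpos : 0 < r := lt_of_le_of_lt (norm_nonneg _) hv
      set v := w - z with hvdef
      -- x' and y' are in K
      have hxball : ∀ u, dist u x < r₁ → u ∈ K := by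
        intro u hu
        by_contra huK
        have : r₁ ≤ dist x u := hxq.trans (Metric.infDist_le_dist_of_mem huK)
        rw [dist_comm] at hu; linarith
      have hyball : ∀ u, dist u y < r₂ → u ∈ K := by
        intro u hu
        by_contra huK
        have : r₂ ≤ dist y u := hyq.trans (Metric.infDist_le_dist_of_mem huK)
        rw [dist_comm] at hu; linarith
      have hx' : x + (r₁ / r) • v ∈ K := by
        rcases eq_or_lt_of_le (dist_nonneg (x := x) (y := q)) with h1 | h1
        · have : r₁ = 0 := h1.symm
          simp [this, hxK]
        · apply hxball
          rw [dist_eq_norm, add_sub_cancel_left, norm_smul, Real.norm_eq_abs,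
            abs_of_nonneg (div_nonneg h1.le hrpos.le)]
          calc r₁ / r * ‖v‖ < r₁ / r * r := by
                apply mul_lt_mul_of_pos_left hv (div_pos h1 hrpos)
            _ = r₁ := by field_simp
      have hy' : y + (r₂ / r) • v ∈ K := by
        rcases eq_or_lt_of_le (dist_nonneg (x := y) (y := q)) with h1 | h1
        · have : r₂ = 0 := h1.symm
          simp [this, hyK]
        · apply hyball
          rw [dist_eq_norm, add_sub_cancel_left, norm_smul, Real.norm_eq_abs,
            abs_of_nonneg (div_nonneg h1.le hrpos.le)]
          calc r₂ / r * ‖v‖ < r₂ / r * r := by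
                apply mul_lt_mul_of_pos_left hv (div_pos h1 hrpos)
            _ = r₂ := by field_simp
      have hwK : w ∈ K := by
        have hcomb : a • (x + (r₁ / r) • v) + b • (y + (r₂ / r) • v) = w := by
          have hcoef : a * (r₁ / r) + b * (r₂ / r) = 1 := by
            field_simp
            exact hr.symm
          have : a • (x + (r₁ / r) • v) + b • (y + (r₂ / r) • v)
              = z + (a * (r₁ / r) + b * (r₂ / r)) • v := by
            simp only [smul_add, smul_smul, hz, add_smul]
            abel
          rw [this, hcoef, one_smul, hvdef]
          abel
        rw [← hcomb]
        exact hK hx' hy' ha hb hab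
      exact hw hwK
    refine le_of_not_gt fun hlt => ?_
    rw [Metric.infDist_lt_iff hc] at hlt
    obtain ⟨w, hw, hdw⟩ := hlt
    exact absurd hdw (not_lt.mpr (hzq.trans (hball w hw)))
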